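/- For positive integers p1, p2, q1, q2, r1, r2, the Laurent polynomial Δ(s) = s·[q1][q2]([p1][p2][r1+r2] + [r1][r2][p1+p2]) + [p1+p2][q1+q2][r1+r2] is symmetric about (p1+p2+q1+q2+r1+r2−3)/2; that is, the coefficient of s^k equals the coefficient of s^{p1+p2+q1+q2+r1+r2−3−k} for all k. -/
import Mathlib


open Polynomial

/-- `qpoly n = 1 + s + ⋯ + s^(n-1)`, denoted `[n]` in the paper. -/
noncomputable def qpoly (n : ℕ) : Polynomial ℤ :=
  ∑ i ∈ Finset.range n, Polynomial.X ^ i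

lemma qpoly_coeff (n k : ℕ) : (qpoly n).coeff k = if k < n then 1 else 0 := by
  simp [qpoly, Polynomial.coeff_X_pow, Finset.sum_ite_eq]

lemma qpoly_natDegree_le (n : ℕ) : (qpoly n).natDegree ≤ n - 1 := by
  rw [Polynomial.natDegree_le_iff_coeff_eq_zero]
  intro m hm
  rw [qpoly_coeff]
  split_ifs with h
  · omega
  · rfl

lemma qpoly_reflect (n : ℕ) (hn : 1 ≤ n) : (qpoly n).reflect (n - 1) = qpoly n := by
  ext i
  rw [Polynomial.coeff_reflect, qpoly_coeff, qpoly_coeff]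
  rcases le_or_gt i (n - 1) with h | h
  · rw [Polynomial.revAt_le h]
    split_ifs <;> omega
  · rw [Polynomial.revAt_eq_self_of_lt h]

lemma qpoly_triple_reflect (a b c : ℕ) (ha : 1 ≤ a) (hb : 1 ≤ b) (hc : 1 ≤ c) :
    (qpoly a * qpoly b * qpoly c).reflect ((a - 1) + (b - 1) + (c - 1)) =
      qpoly a * qpoly b * qpoly c := by
  rw [Polynomial.reflect_mul _ _
      (Polynomial.natDegree_mul_le.trans
        (add_le_add (qpoly_natDegree_le a) (qpoly_natDegree_le b)))
      (qpoly_natDegree_le c),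
    Polynomial.reflect_mul _ _ (qpoly_natDegree_le a) (qpoly_natDegree_le b),
    qpoly_reflect a ha, qpoly_reflect b hb, qpoly_reflect c hc]

lemma qpoly_triple_natDegree_le (a b c : ℕ) :
    (qpoly a * qpoly b * qpoly c).natDegree ≤ (a - 1) + (b - 1) + (c - 1) :=
  Polynomial.natDegree_mul_le.trans
    (add_le_add (Polynomial.natDegree_mul_le.trans
      (add_le_add (qpoly_natDegree_le a) (qpoly_natDegree_le b)))
      (qpoly_natDegree_le c))

theorem alexander_two_block_symmetric (p1 p2 q1 q2 r1 r2 : ℕ)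
    (hp1 : 1 ≤ p1) (hp2 : 1 ≤ p2) (hq1 : 1 ≤ q1) (hq2 : 1 ≤ q2)
    (hr1 : 1 ≤ r1) (hr2 : 1 ≤ r2) :
    ∀ k ≤ p1 + p2 + q1 + q2 + r1 + r2 - 3,
      (Polynomial.X * (qpoly q1 * qpoly q2 *
            (qpoly p1 * qpoly p2 * qpoly (r1 + r2) +
              qpoly r1 * qpoly r2 * qpoly (p1 + p2))) +
          qpoly (p1 + p2) * qpoly (q1 + q2) * qpoly (r1 + r2)).coeff k =
        (Polynomial.X * (qpoly q1 * qpoly q2 *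
            (qpoly p1 * qpoly p2 * qpoly (r1 + r2) +
              qpoly r1 * qpoly r2 * qpoly (p1 + p2))) +
          qpoly (p1 + p2) * qpoly (q1 + q2) * qpoly (r1 + r2)).coeff
          (p1 + p2 + q1 + q2 + r1 + r2 - 3 - k) := by
  set D : ℕ := p1 + p2 + q1 + q2 + r1 + r2 - 3 with hDdef
  set E : ℕ := p1 + p2 + r1 + r2 - 3 with hEdef
  set B : Polynomial ℤ :=
    qpoly p1 * qpoly p2 * qpoly (r1 + r2) + qpoly r1 * qpoly r2 * qpoly (p1 + p2)
    with hBdef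
  set A : Polynomial ℤ := qpoly q1 * qpoly q2 with hAdef
  set T : Polynomial ℤ := qpoly (p1 + p2) * qpoly (q1 + q2) * qpoly (r1 + r2)
    with hTdef
  -- B is palindromic about E
  have hB1 : (qpoly p1 * qpoly p2 * qpoly (r1 + r2)).reflect E =
      qpoly p1 * qpoly p2 * qpoly (r1 + r2) := by
    rw [show E = (p1 - 1) + (p2 - 1) + ((r1 + r2) - 1) by omega]
    exact qpoly_triple_reflect p1 p2 (r1 + r2) hp1 hp2 (by omega)
  have hB2 : (qpoly r1 * qpoly r2 * qpoly (p1 + p2)).reflect E =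
      qpoly r1 * qpoly r2 * qpoly (p1 + p2) := by
    rw [show E = (r1 - 1) + (r2 - 1) + ((p1 + p2) - 1) by omega]
    exact qpoly_triple_reflect r1 r2 (p1 + p2) hr1 hr2 (by omega)
  have hBrefl : B.reflect E = B := by
    rw [hBdef, Polynomial.reflect_add, hB1, hB2]
  have hBdeg : B.natDegree ≤ E := by
    have h1 := qpoly_triple_natDegree_le p1 p2 (r1 + r2)
    have h2 := qpoly_triple_natDegree_le r1 r2 (p1 + p2)
    have := Polynomial.natDegree_add_le (qpoly p1 * qpoly p2 * qpoly (r1 + r2))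
      (qpoly r1 * qpoly r2 * qpoly (p1 + p2))
    rw [← hBdef] at this
    omega
  -- A * B is palindromic about (q1-1)+(q2-1)+E
  have hABrefl : (A * B).reflect ((q1 - 1) + (q2 - 1) + E) = A * B := by
    rw [hAdef, Polynomial.reflect_mul _ _
        (Polynomial.natDegree_mul_le.trans
          (add_le_add (qpoly_natDegree_le q1) (qpoly_natDegree_le q2))) hBdeg,
      Polynomial.reflect_mul _ _ (qpoly_natDegree_le q1) (qpoly_natDegree_le q2),
      qpoly_reflect q1 hq1, qpoly_reflect q2 hq2, hBrefl]
  have hABdeg : (A * B).natDegree ≤ (q1 - 1) + (q2 - 1) + E := by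
    have := Polynomial.natDegree_mul_le (p := A) (q := B)
    have hA := Polynomial.natDegree_mul_le.trans
      (add_le_add (qpoly_natDegree_le q1) (qpoly_natDegree_le q2))
    rw [← hAdef] at hA
    omega
  -- reflect 2 X = X
  have hXrefl : (Polynomial.X : Polynomial ℤ).reflect 2 = Polynomial.X := by
    rw [← pow_one (Polynomial.X (R := ℤ)), Polynomial.reflect_monomial]
    norm_num
  -- X * (A * B) is palindromic about D
  have hXAB : (Polynomial.X * (A * B)).reflect D = Polynomial.X * (A * B) := by
    rw [show D = 2 + ((q1 - 1) + (q2 - 1) + E) by omega,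
      Polynomial.reflect_mul _ _ (by simp) hABdeg,
      hXrefl, hABrefl]
  -- T is palindromic about D
  have hTrefl : T.reflect D = T := by
    rw [hTdef, show D = ((p1 + p2) - 1) + ((q1 + q2) - 1) + ((r1 + r2) - 1) by omega]
    exact qpoly_triple_reflect (p1 + p2) (q1 + q2) (r1 + r2) (by omega) (by omega)
      (by omega)
  have hPrefl : (Polynomial.X * (A * B) + T).reflect D = Polynomial.X * (A * B) + T := by
    rw [Polynomial.reflect_add, hXAB, hTrefl]
  intro k hk
  conv_lhs => rw [← hPrefl]
  rw [Polynomial.coeff_reflect, Polynomial.revAt_le hk]
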